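/- In the setting of Motif (i) with σ = (μ₁−μ₂)(μ₁δ₁η₂ − μ₂δ₂η₁) < 0, if either (a) μ₁ > μ₂ and (μ₂F̄ ≥ Ē or Ē ≥ μ₁F̄), or (b) μ₂ > μ₁ and (μ₁F̄ ≥ Ē or Ē ≥ μ₂F̄), then det J_ψ(Y₁,Y₂) > 0 for all (Y₁,Y₂) ∈ Γ̄. -/

import Mathlib

open Set

/-- First partial derivative of a function of two real variables. -/
noncomputable def pd1 (g : ℝ → ℝ → ℝ) (a b : ℝ) : ℝ := deriv (fun t => g t b) a

/-- Second partial derivative of a function of two real variables. -/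
noncomputable def pd2 (g : ℝ → ℝ → ℝ) (a b : ℝ) : ℝ := deriv (fun t => g a t) b

lemma hasDerivAt_linfrac (a b c d x : ℝ) (h : a - b * x ≠ 0) :
    HasDerivAt (fun t : ℝ => (c * t + d) / (a - b * t))
      ((c * a + d * b) / (a - b * x) ^ 2) x := by
  have h1 : HasDerivAt (fun t : ℝ => c * t + d) c x := by
    simpa using ((hasDerivAt_id x).const_mul c).add_const d
  have h2 : HasDerivAt (fun t : ℝ => a - b * t) (-b) x := by
    simpa using (((hasDerivAt_id x).const_mul b).const_sub a)
  have := h1.div h2 h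
  simp only [Pi.div_def] at this
  exact this.congr_deriv (by ring)

lemma deriv_own (η δ μ ν A B x : ℝ) (hA : A - μ * x ≠ 0) (hB : B - x ≠ 0)
    (hη : η ≠ 0) (hδ : δ ≠ 0) :
    deriv (fun t => μ * t / (η * (A - μ * t)) + t / (δ * (B - t)) + (1 + ν) * t) x
      = μ * A / (η * (A - μ * x) ^ 2) + B / (δ * (B - x) ^ 2) + (1 + ν) := by
  have hne1 : η * A - η * μ * x ≠ 0 := by
    have e : η * A - η * μ * x = η * (A - μ * x) := by ring
    rw [e]; exact mul_ne_zero hη hA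
  have hne2 : δ * B - δ * x ≠ 0 := by
    have e : δ * B - δ * x = δ * (B - x) := by ring
    rw [e]; exact mul_ne_zero hδ hB
  have hd := ((hasDerivAt_linfrac (η * A) (η * μ) μ 0 x hne1).add
      (hasDerivAt_linfrac (δ * B) δ 1 0 x hne2)).add
      ((hasDerivAt_id x).const_mul (1 + ν))
  simp only [id_eq, Pi.add_def] at hd
  have hfun : (fun t : ℝ => (μ * t + 0) / (η * A - η * μ * t) +
      (1 * t + 0) / (δ * B - δ * t) + (1 + ν) * t)
      = (fun t : ℝ => μ * t / (η * (A - μ * t)) + t / (δ * (B - t)) + (1 + ν) * t) := by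
    funext t; ring_nf
  rw [hfun] at hd
  rw [hd.deriv]
  field_simp
  ring

lemma deriv_cross (η δ ν c k K A B x : ℝ) (hA : A - ν * x ≠ 0) (hB : B - x ≠ 0)
    (hη : η ≠ 0) (hδ : δ ≠ 0) :
    deriv (fun t => c / (η * (A - ν * t)) + k / (δ * (B - t)) + K) x
      = c * ν / (η * (A - ν * x) ^ 2) + k / (δ * (B - x) ^ 2) := by
  have hne1 : η * A - η * ν * x ≠ 0 := by
    have e : η * A - η * ν * x = η * (A - ν * x) := by ring
    rw [e]; exact mul_ne_zero hη hA
  have hne2 : δ * B - δ * x ≠ 0 := by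
    have e : δ * B - δ * x = δ * (B - x) := by ring
    rw [e]; exact mul_ne_zero hδ hB
  have hd := ((hasDerivAt_linfrac (η * A) (η * ν) 0 c x hne1).add
      (hasDerivAt_linfrac (δ * B) δ 0 k x hne2)).add (hasDerivAt_const x K)
  simp only [Pi.add_def] at hd
  have hfun : (fun t : ℝ => (0 * t + c) / (η * A - η * ν * t) +
      (0 * t + k) / (δ * B - δ * t) + K)
      = (fun t : ℝ => c / (η * (A - ν * t)) + k / (δ * (B - t)) + K) := by
    funext t; ring_nf
  rw [hfun] at hd
  rw [hd.deriv]
  field_simp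
  ring

lemma key_alg (η₁ η₂ δ₁ δ₂ μ₁ μ₂ Ebar Fbar Y₁ Y₂ E F : ℝ)
    (hη₁ : 0 < η₁) (hη₂ : 0 < η₂) (hδ₁ : 0 < δ₁) (hδ₂ : 0 < δ₂)
    (hμ₁ : 0 < μ₁) (hμ₂ : 0 < μ₂)
    (hY₁ : 0 ≤ Y₁) (hY₂ : 0 ≤ Y₂)
    (hEdef : E = Ebar - μ₁ * Y₁ - μ₂ * Y₂) (hFdef : F = Fbar - Y₁ - Y₂)
    (hEp : 0 < E) (hFp : 0 < F)
    (hcase : (μ₂ < μ₁ ∧ (Ebar ≤ μ₂ * Fbar ∨ μ₁ * Fbar ≤ Ebar)) ∨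
             (μ₁ < μ₂ ∧ (Ebar ≤ μ₁ * Fbar ∨ μ₂ * Fbar ≤ Ebar))) :
    0 < (μ₁ * (E + μ₁ * Y₁) / (η₁ * E ^ 2) + (F + Y₁) / (δ₁ * F ^ 2) + (1 + μ₁)) *
        (μ₂ * (E + μ₂ * Y₂) / (η₂ * E ^ 2) + (F + Y₂) / (δ₂ * F ^ 2) + (1 + μ₂)) -
        (μ₁ * μ₂ * Y₁ / (η₁ * E ^ 2) + Y₁ / (δ₁ * F ^ 2)) *
        (μ₁ * μ₂ * Y₂ / (η₂ * E ^ 2) + Y₂ / (δ₂ * F ^ 2)) := by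
  have hEbar : Ebar = E + μ₁ * Y₁ + μ₂ * Y₂ := by linarith
  have hFbar : Fbar = F + Y₁ + Y₂ := by linarith
  subst hEbar hFbar
  set G1 : ℝ := E * F + E * Y₂ + μ₁ * Y₁ * F + (μ₁ - μ₂) * Y₁ * Y₂ with hG1def
  set G2 : ℝ := E * F + E * Y₁ + μ₂ * Y₂ * F + (μ₂ - μ₁) * Y₁ * Y₂ with hG2def
  have hG1 : 0 ≤ G1 := by
    rcases hcase with ⟨hlt, hsub⟩ | ⟨hlt, hsub⟩
    · have : 0 ≤ (μ₁ - μ₂) * Y₁ * Y₂ := mul_nonneg (mul_nonneg (by linarith) hY₁) hY₂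
      nlinarith [mul_pos hEp hFp, mul_nonneg hEp.le hY₂, mul_nonneg (mul_nonneg hμ₁.le hY₁) hFp.le]
    · rcases hsub with h | h
      · nlinarith [mul_nonneg hY₁ (sub_nonneg.2 h), mul_pos hFp hEp,
          mul_nonneg hY₁ hY₂, mul_nonneg hY₂ hEp.le, mul_nonneg hY₁ hEp.le]
      · nlinarith [mul_nonneg hY₂ (sub_nonneg.2 h), mul_pos hEp hFp,
          mul_nonneg hY₁ hY₂, mul_nonneg hY₁ hFp.le, mul_nonneg hY₂ hFp.le]
  have hG2 : 0 ≤ G2 := by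
    rcases hcase with ⟨hlt, hsub⟩ | ⟨hlt, hsub⟩
    · rcases hsub with h | h
      · nlinarith [mul_nonneg hY₂ (sub_nonneg.2 h), mul_pos hFp hEp,
          mul_nonneg hY₁ hY₂, mul_nonneg hY₁ hEp.le, mul_nonneg hY₂ hEp.le]
      · nlinarith [mul_nonneg hY₁ (sub_nonneg.2 h), mul_pos hEp hFp,
          mul_nonneg hY₁ hY₂, mul_nonneg hY₂ hFp.le, mul_nonneg hY₁ hFp.le]
    · have : 0 ≤ (μ₂ - μ₁) * Y₁ * Y₂ := mul_nonneg (mul_nonneg (by linarith) hY₁) hY₂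
      nlinarith [mul_pos hEp hFp, mul_nonneg hEp.le hY₁, mul_nonneg (mul_nonneg hμ₂.le hY₂) hFp.le]
  set Ebar : ℝ := E + μ₁ * Y₁ + μ₂ * Y₂ with hEb
  set Fbar : ℝ := F + Y₁ + Y₂ with hFb
  have hEbp : 0 < Ebar := by rw [hEb]; positivity
  have hFbp : 0 < Fbar := by rw [hFb]; positivity
  set Q : ℝ :=
      μ₁ * μ₂ * E * Ebar * (δ₁ * δ₂ * F ^ 4)
    + F * Fbar * (η₁ * η₂ * E ^ 4)
    + μ₁ * G1 * (η₂ * δ₁ * E ^ 2 * F ^ 2)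
    + μ₂ * G2 * (η₁ * δ₂ * E ^ 2 * F ^ 2)
    + (1 + μ₂) * (μ₁ * (E + μ₁ * Y₁) * (η₂ * δ₁ * δ₂ * E ^ 2 * F ^ 4)
        + (F + Y₁) * (η₁ * η₂ * δ₂ * E ^ 4 * F ^ 2))
    + (1 + μ₁) * (μ₂ * (E + μ₂ * Y₂) * (η₁ * δ₁ * δ₂ * E ^ 2 * F ^ 4)
        + (F + Y₂) * (η₁ * η₂ * δ₁ * E ^ 4 * F ^ 2))
    + (1 + μ₁) * (1 + μ₂) * (η₁ * η₂ * δ₁ * δ₂ * E ^ 4 * F ^ 4) with hQdef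
  have hQ : 0 < Q := by
    have t1 : 0 < μ₁ * μ₂ * E * Ebar * (δ₁ * δ₂ * F ^ 4) := by positivity
    have t2 : 0 < F * Fbar * (η₁ * η₂ * E ^ 4) := by positivity
    have t3 : 0 ≤ μ₁ * G1 * (η₂ * δ₁ * E ^ 2 * F ^ 2) :=
      mul_nonneg (mul_nonneg hμ₁.le hG1) (by positivity)
    have t4 : 0 ≤ μ₂ * G2 * (η₁ * δ₂ * E ^ 2 * F ^ 2) :=
      mul_nonneg (mul_nonneg hμ₂.le hG2) (by positivity)
    have t5 : 0 < (1 + μ₂) * (μ₁ * (E + μ₁ * Y₁) * (η₂ * δ₁ * δ₂ * E ^ 2 * F ^ 4)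
        + (F + Y₁) * (η₁ * η₂ * δ₂ * E ^ 4 * F ^ 2)) := by positivity
    have t6 : 0 < (1 + μ₁) * (μ₂ * (E + μ₂ * Y₂) * (η₁ * δ₁ * δ₂ * E ^ 2 * F ^ 4)
        + (F + Y₂) * (η₁ * η₂ * δ₁ * E ^ 4 * F ^ 2)) := by positivity
    have t7 : 0 < (1 + μ₁) * (1 + μ₂) * (η₁ * η₂ * δ₁ * δ₂ * E ^ 4 * F ^ 4) := by positivity
    rw [hQdef]; linarith
  have hden : (0:ℝ) < η₁ * η₂ * δ₁ * δ₂ * E ^ 4 * F ^ 4 := by positivity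
  have hiden :
      (μ₁ * (E + μ₁ * Y₁) / (η₁ * E ^ 2) + (F + Y₁) / (δ₁ * F ^ 2) + (1 + μ₁)) *
        (μ₂ * (E + μ₂ * Y₂) / (η₂ * E ^ 2) + (F + Y₂) / (δ₂ * F ^ 2) + (1 + μ₂)) -
        (μ₁ * μ₂ * Y₁ / (η₁ * E ^ 2) + Y₁ / (δ₁ * F ^ 2)) *
        (μ₁ * μ₂ * Y₂ / (η₂ * E ^ 2) + Y₂ / (δ₂ * F ^ 2))
      = Q / (η₁ * η₂ * δ₁ * δ₂ * E ^ 4 * F ^ 4) := by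
    rw [hQdef, hG1def, hG2def, hEb, hFb]
    field_simp
    ring
  rw [hiden]
  exact div_pos hQ hden

/-- Motif (i): even when `σ < 0`, if (a) `μ₁ > μ₂` and (`μ₂F̄ ≥ Ē` or
`Ē ≥ μ₁F̄`), or (b) `μ₂ > μ₁` and (`μ₁F̄ ≥ Ē` or `Ē ≥ μ₂F̄`), then the
Jacobian determinant of `ψ = (φ₁, φ₂)` is positive on all of `Γ̄`. -/
theorem motif_i_det_pos_sigma_neg (η₁ η₂ δ₁ δ₂ μ₁ μ₂ Ebar Fbar : ℝ)
    (hη₁ : 0 < η₁) (hη₂ : 0 < η₂) (hδ₁ : 0 < δ₁) (hδ₂ : 0 < δ₂)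
    (hμ₁ : 0 < μ₁) (hμ₂ : 0 < μ₂) (hE : 0 < Ebar) (hF : 0 < Fbar)
    (hσ : (μ₁ - μ₂) * (μ₁ * δ₁ * η₂ - μ₂ * δ₂ * η₁) < 0)
    (hcase : (μ₂ < μ₁ ∧ (Ebar ≤ μ₂ * Fbar ∨ μ₁ * Fbar ≤ Ebar)) ∨
             (μ₁ < μ₂ ∧ (Ebar ≤ μ₁ * Fbar ∨ μ₂ * Fbar ≤ Ebar))) :
    let φ₁ : ℝ → ℝ → ℝ := fun Y₁ Y₂ =>
      μ₁ * Y₁ / (η₁ * (Ebar - μ₁ * Y₁ - μ₂ * Y₂)) +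
        Y₁ / (δ₁ * (Fbar - Y₁ - Y₂)) + (1 + μ₁) * Y₁
    let φ₂ : ℝ → ℝ → ℝ := fun Y₁ Y₂ =>
      μ₂ * Y₂ / (η₂ * (Ebar - μ₁ * Y₁ - μ₂ * Y₂)) +
        Y₂ / (δ₂ * (Fbar - Y₁ - Y₂)) + (1 + μ₂) * Y₂
    ∀ Y₁ Y₂ : ℝ, 0 ≤ Y₁ → 0 ≤ Y₂ → Y₁ + Y₂ < Fbar →
      μ₁ * Y₁ + μ₂ * Y₂ < Ebar →
      0 < pd1 φ₁ Y₁ Y₂ * pd2 φ₂ Y₁ Y₂ - pd2 φ₁ Y₁ Y₂ * pd1 φ₂ Y₁ Y₂ := by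
  intro φ₁ φ₂ Y₁ Y₂ hY₁ hY₂ hFs hEs
  have hEp : 0 < Ebar - μ₁ * Y₁ - μ₂ * Y₂ := by linarith
  have hFp : 0 < Fbar - Y₁ - Y₂ := by linarith
  have hEA1 : (Ebar - μ₂ * Y₂) - μ₁ * Y₁ ≠ 0 := by
    have : (Ebar - μ₂ * Y₂) - μ₁ * Y₁ = Ebar - μ₁ * Y₁ - μ₂ * Y₂ := by ring
    rw [this]; exact hEp.ne'
  have hFA1 : (Fbar - Y₂) - Y₁ ≠ 0 := by
    have : (Fbar - Y₂) - Y₁ = Fbar - Y₁ - Y₂ := by ring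
    rw [this]; exact hFp.ne'
  have hEA2 : (Ebar - μ₁ * Y₁) - μ₂ * Y₂ ≠ 0 := by
    have : (Ebar - μ₁ * Y₁) - μ₂ * Y₂ = Ebar - μ₁ * Y₁ - μ₂ * Y₂ := by ring
    rw [this]; exact hEp.ne'
  have hFA2 : (Fbar - Y₁) - Y₂ ≠ 0 := by
    have : (Fbar - Y₁) - Y₂ = Fbar - Y₁ - Y₂ := by ring
    rw [this]; exact hFp.ne'
  have h1 : pd1 φ₁ Y₁ Y₂ =
      μ₁ * ((Ebar - μ₁ * Y₁ - μ₂ * Y₂) + μ₁ * Y₁) / (η₁ * (Ebar - μ₁ * Y₁ - μ₂ * Y₂) ^ 2)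
        + ((Fbar - Y₁ - Y₂) + Y₁) / (δ₁ * (Fbar - Y₁ - Y₂) ^ 2) + (1 + μ₁) := by
    have hfun : (fun t => φ₁ t Y₂) = (fun t : ℝ =>
        μ₁ * t / (η₁ * ((Ebar - μ₂ * Y₂) - μ₁ * t)) +
          t / (δ₁ * ((Fbar - Y₂) - t)) + (1 + μ₁) * t) := by
      funext t
      show μ₁ * t / (η₁ * (Ebar - μ₁ * t - μ₂ * Y₂)) +
          t / (δ₁ * (Fbar - t - Y₂)) + (1 + μ₁) * t = _
      ring_nf
    rw [pd1, hfun, deriv_own η₁ δ₁ μ₁ μ₁ (Ebar - μ₂ * Y₂) (Fbar - Y₂) Y₁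
      hEA1 hFA1 hη₁.ne' hδ₁.ne']
    have e1 : (Ebar - μ₂ * Y₂) - μ₁ * Y₁ = Ebar - μ₁ * Y₁ - μ₂ * Y₂ := by ring
    have e2 : (Fbar - Y₂) - Y₁ = Fbar - Y₁ - Y₂ := by ring
    rw [e1, e2]
    ring
  have h2 : pd2 φ₂ Y₁ Y₂ =
      μ₂ * ((Ebar - μ₁ * Y₁ - μ₂ * Y₂) + μ₂ * Y₂) / (η₂ * (Ebar - μ₁ * Y₁ - μ₂ * Y₂) ^ 2)
        + ((Fbar - Y₁ - Y₂) + Y₂) / (δ₂ * (Fbar - Y₁ - Y₂) ^ 2) + (1 + μ₂) := by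
    have hfun : (fun t => φ₂ Y₁ t) = (fun t : ℝ =>
        μ₂ * t / (η₂ * ((Ebar - μ₁ * Y₁) - μ₂ * t)) +
          t / (δ₂ * ((Fbar - Y₁) - t)) + (1 + μ₂) * t) := by
      funext t
      show μ₂ * t / (η₂ * (Ebar - μ₁ * Y₁ - μ₂ * t)) +
          t / (δ₂ * (Fbar - Y₁ - t)) + (1 + μ₂) * t = _
      ring_nf
    rw [pd2, hfun, deriv_own η₂ δ₂ μ₂ μ₂ (Ebar - μ₁ * Y₁) (Fbar - Y₁) Y₂
      hEA2 hFA2 hη₂.ne' hδ₂.ne']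
    have e1 : (Ebar - μ₁ * Y₁) - μ₂ * Y₂ = Ebar - μ₁ * Y₁ - μ₂ * Y₂ := by ring
    have e2 : (Fbar - Y₁) - Y₂ = Fbar - Y₁ - Y₂ := by ring
    rw [e1, e2]
    ring
  have h3 : pd2 φ₁ Y₁ Y₂ =
      μ₁ * μ₂ * Y₁ / (η₁ * (Ebar - μ₁ * Y₁ - μ₂ * Y₂) ^ 2)
        + Y₁ / (δ₁ * (Fbar - Y₁ - Y₂) ^ 2) := by
    have hfun : (fun t => φ₁ Y₁ t) = (fun t : ℝ =>
        μ₁ * Y₁ / (η₁ * ((Ebar - μ₁ * Y₁) - μ₂ * t)) +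
          Y₁ / (δ₁ * ((Fbar - Y₁) - t)) + (1 + μ₁) * Y₁) := by
      funext t
      show μ₁ * Y₁ / (η₁ * (Ebar - μ₁ * Y₁ - μ₂ * t)) +
          Y₁ / (δ₁ * (Fbar - Y₁ - t)) + (1 + μ₁) * Y₁ = _
      ring_nf
    rw [pd2, hfun, deriv_cross η₁ δ₁ μ₂ (μ₁ * Y₁) Y₁ ((1 + μ₁) * Y₁)
      (Ebar - μ₁ * Y₁) (Fbar - Y₁) Y₂ hEA2 hFA2 hη₁.ne' hδ₁.ne']
    have e1 : (Ebar - μ₁ * Y₁) - μ₂ * Y₂ = Ebar - μ₁ * Y₁ - μ₂ * Y₂ := by ring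
    have e2 : (Fbar - Y₁) - Y₂ = Fbar - Y₁ - Y₂ := by ring
    rw [e1, e2]
    ring
  have h4 : pd1 φ₂ Y₁ Y₂ =
      μ₁ * μ₂ * Y₂ / (η₂ * (Ebar - μ₁ * Y₁ - μ₂ * Y₂) ^ 2)
        + Y₂ / (δ₂ * (Fbar - Y₁ - Y₂) ^ 2) := by
    have hfun : (fun t => φ₂ t Y₂) = (fun t : ℝ =>
        μ₂ * Y₂ / (η₂ * ((Ebar - μ₂ * Y₂) - μ₁ * t)) +
          Y₂ / (δ₂ * ((Fbar - Y₂) - t)) + (1 + μ₂) * Y₂) := by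
      funext t
      show μ₂ * Y₂ / (η₂ * (Ebar - μ₁ * t - μ₂ * Y₂)) +
          Y₂ / (δ₂ * (Fbar - t - Y₂)) + (1 + μ₂) * Y₂ = _
      ring_nf
    rw [pd1, hfun, deriv_cross η₂ δ₂ μ₁ (μ₂ * Y₂) Y₂ ((1 + μ₂) * Y₂)
      (Ebar - μ₂ * Y₂) (Fbar - Y₂) Y₁ hEA1 hFA1 hη₂.ne' hδ₂.ne']
    have e1 : (Ebar - μ₂ * Y₂) - μ₁ * Y₁ = Ebar - μ₁ * Y₁ - μ₂ * Y₂ := by ring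
    have e2 : (Fbar - Y₂) - Y₁ = Fbar - Y₁ - Y₂ := by ring
    rw [e1, e2]
    ring
  rw [h1, h2, h3, h4]
  exact key_alg η₁ η₂ δ₁ δ₂ μ₁ μ₂ Ebar Fbar Y₁ Y₂
    (Ebar - μ₁ * Y₁ - μ₂ * Y₂) (Fbar - Y₁ - Y₂)
    hη₁ hη₂ hδ₁ hδ₂ hμ₁ hμ₂ hY₁ hY₂ rfl rfl hEp hFp hcase
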